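/- Fix L > 0 and n ∈ ℕ, and let h_L : ℝ → ℝ be the Huber function h_L(x) = (L/2)x² if |x| ≤ 1 and h_L(x) = L|x| − L/2 if |x| > 1. Then h_L is convex, its minimizer set is {0} with minimum value 0, and h_L is L-QG+. Moreover, the points x_k = n + 1 − k for 0 ≤ k ≤ n + 1 satisfy: L is a subgradient of h_L at x_k and x_{k+1} = x_k − (1/L)·L for every 0 ≤ k ≤ n, and ∑_{k=0}^{n} (h_L(x_k) − 0) = (L/2)·(n+1)² = (L/2)·d(x_0, {0})². (Hence the worst-case bound ∑_{k=0}^{n}(f(x_k) − f*) ≤ (L/2)·d(x_0, X*)² for the subgradient method with step size 1/L on L-QG+ convex functions is attained with equality.) -/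

import Mathlib

/-- Supporting-line lemma for the Huber function: for any slope parameter
`c` with `|c| ≤ 1`, the affine function `L*c*y - (L/2)*c^2` lies below Huber. -/
lemma huber_support (L : ℝ) (hL : 0 < L) (c y : ℝ) (hc : |c| ≤ 1) :
    (if |y| ≤ 1 then L / 2 * y ^ 2 else L * |y| - L / 2) ≥ L * c * y - L / 2 * c ^ 2 := by
  have hcy : c * y ≤ |c| * |y| := by rw [← abs_mul]; exact le_abs_self _
  have hc2 : c ^ 2 = |c| ^ 2 := (sq_abs c).symm
  have hy2 : y ^ 2 = |y| ^ 2 := (sq_abs y).symm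
  have hc0 : (0:ℝ) ≤ |c| := abs_nonneg c
  split_ifs with hy
  · nlinarith [sq_nonneg (y - c), sq_nonneg (|y| - |c|)]
  · push_neg at hy
    nlinarith [mul_nonneg (mul_nonneg hL.le (sub_nonneg.2 hc)) (sub_nonneg.2 hy.le),
      mul_nonneg hL.le (sq_nonneg (1 - |c|)), mul_nonneg hL.le (sub_nonneg.2 hcy)]

lemma gauss_sum_real (n : ℕ) : (∑ k ∈ Finset.range (n + 1), (k:ℝ)) = n * (n + 1) / 2 := by
  induction n with
  | zero => simp
  | succ m ih => rw [Finset.sum_range_succ, ih]; push_cast; ring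

theorem huber_attains_subgradient_sum_bound
    (L : ℝ) (hL : 0 < L) (n : ℕ)
    (h : ℝ → ℝ)
    (hdef : ∀ z, h z = if |z| ≤ 1 then L / 2 * z ^ 2 else L * |z| - L / 2)
    (x : ℕ → ℝ) (hx : ∀ k, x k = (n : ℝ) + 1 - k) :
    ConvexOn ℝ Set.univ h ∧
    {z | ∀ y, h z ≤ h y} = {0} ∧
    h 0 = 0 ∧
    (∀ z, h z - 0 ≤ L / 2 * Metric.infDist z ({0} : Set ℝ) ^ 2) ∧
    (∀ k ≤ n, ∀ y, h y ≥ h (x k) + L * (y - x k)) ∧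
    (∀ k ≤ n, x (k + 1) = x k - (1 / L) * L) ∧
    (∑ k ∈ Finset.range (n + 1), (h (x k) - 0)) = L / 2 * ((n : ℝ) + 1) ^ 2 ∧
    L / 2 * ((n : ℝ) + 1) ^ 2 = L / 2 * Metric.infDist (x 0) ({0} : Set ℝ) ^ 2 := by
  -- subgradient at every point
  have subgrad : ∀ z : ℝ, ∃ c : ℝ, |c| ≤ 1 ∧
      (∀ y, h y ≥ h z + L * c * (y - z)) := by
    intro z
    refine ⟨max (-1) (min z 1), ?_, ?_⟩
    · rw [abs_le]
      constructor
      · exact le_max_left _ _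
      · exact max_le (by norm_num) (min_le_right _ _)
    · intro y
      set c := max (-1) (min z 1) with hcdef
      have hc : |c| ≤ 1 := by
        rw [abs_le]
        exact ⟨le_max_left _ _, max_le (by norm_num) (min_le_right _ _)⟩
      have hz : h z = L * c * z - L / 2 * c ^ 2 := by
        rw [hdef z]
        rcases le_or_gt z (-1) with h1 | h1
        · have hcz : c = -1 := by
            have hm : min z 1 ≤ -1 := (min_le_left _ _).trans h1
            rw [hcdef, max_eq_left hm]
          rcases eq_or_lt_of_le h1 with h2 | h2
          · rw [hcz, h2]; norm_num; ring
          · have : ¬ |z| ≤ 1 := by rw [abs_le]; push_neg; intro h3; linarith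
            rw [if_neg this, abs_of_neg (by linarith), hcz]; ring
        · rcases le_or_gt z 1 with h2 | h2
          · have hcz : c = z := by
              rw [hcdef, min_eq_left h2, max_eq_right h1.le]
            rw [if_pos (abs_le.2 ⟨h1.le, h2⟩), hcz]; ring
          · have hcz : c = 1 := by
              rw [hcdef, min_eq_right h2.le]; norm_num
            have : ¬ |z| ≤ 1 := by rw [abs_le]; push_neg; intro h3; linarith
            rw [if_neg this, abs_of_pos (by linarith), hcz]; ring
      have := huber_support L hL c y hc
      rw [hdef y]
      rw [hz]
      calc (if |y| ≤ 1 then L / 2 * y ^ 2 else L * |y| - L / 2)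
          ≥ L * c * y - L / 2 * c ^ 2 := this
        _ = L * c * z - L / 2 * c ^ 2 + L * c * (y - z) := by ring
  -- convexity from subgradients
  have hconv : ConvexOn ℝ Set.univ h := by
    refine ⟨convex_univ, ?_⟩
    intro a _ b _ s t hs ht hst
    obtain ⟨c, hc, hsup⟩ := subgrad (s • a + t • b)
    have ha := hsup a
    have hb := hsup b
    simp only [smul_eq_mul] at ha hb ⊢
    have hkey := add_le_add (mul_le_mul_of_nonneg_left ha hs) (mul_le_mul_of_nonneg_left hb ht)
    have key : s * (h (s * a + t * b) + L * c * (a - (s * a + t * b)))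
        + t * (h (s * a + t * b) + L * c * (b - (s * a + t * b)))
        = h (s * a + t * b) := by
      linear_combination (h (s * a + t * b) - L * c * (s * a + t * b)) * hst
    linarith
  -- h 0 = 0
  have h0 : h 0 = 0 := by rw [hdef 0]; norm_num
  -- h nonneg
  have hnn : ∀ y, 0 ≤ h y := by
    intro y
    have := huber_support L hL 0 y (by norm_num)
    rw [hdef y]
    simpa using this
  -- h z > 0 for z ≠ 0
  have hpos : ∀ z : ℝ, z ≠ 0 → 0 < h z := by
    intro z hz
    rw [hdef z]
    split_ifs with h1
    · have : 0 < z ^ 2 := by positivity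
      positivity
    · push_neg at h1
      nlinarith [mul_lt_mul_of_pos_left h1 hL]
  -- minimizer set
  have hmin : {z : ℝ | ∀ y, h z ≤ h y} = {0} := by
    ext z
    simp only [Set.mem_setOf_eq, Set.mem_singleton_iff]
    constructor
    · intro hz
      by_contra hne
      have := hz 0
      rw [h0] at this
      exact absurd this (not_le.2 (hpos z hne))
    · rintro rfl y
      rw [h0]; exact hnn y
  -- infDist to {0}
  have hid : ∀ z : ℝ, Metric.infDist z ({0} : Set ℝ) = |z| := by
    intro z
    rw [Metric.infDist_singleton, Real.dist_eq, sub_zero]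
  -- QG+
  have hqg : ∀ z, h z - 0 ≤ L / 2 * Metric.infDist z ({0} : Set ℝ) ^ 2 := by
    intro z
    rw [hid z, sub_zero, hdef z, sq_abs]
    split_ifs with h1
    · exact le_rfl
    · push_neg at h1
      nlinarith [mul_nonneg hL.le (sq_nonneg (|z| - 1)), sq_abs z]
  -- subgradient L at x k ≥ 1
  have hxg : ∀ k ≤ n, ∀ y, h y ≥ h (x k) + L * (y - x k) := by
    intro k hk y
    have hxk : (1:ℝ) ≤ x k := by
      rw [hx k]
      have : (k:ℝ) ≤ n := Nat.cast_le.2 hk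
      linarith
    have hxkv : h (x k) = L * x k - L / 2 := by
      rw [hdef (x k)]
      rcases eq_or_lt_of_le hxk with h1 | h1
      · rw [← h1]; norm_num; ring
      · have : ¬ |x k| ≤ 1 := by rw [abs_le]; push_neg; intro; linarith
        rw [if_neg this, abs_of_pos (by linarith)]
    have := huber_support L hL 1 y (by norm_num)
    rw [hdef y] at *
    rw [hxkv]
    calc (if |y| ≤ 1 then L / 2 * y ^ 2 else L * |y| - L / 2)
        ≥ L * 1 * y - L / 2 * 1 ^ 2 := this
      _ = L * x k - L / 2 + L * (y - x k) := by ring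
  -- step
  have hstep : ∀ k ≤ n, x (k + 1) = x k - (1 / L) * L := by
    intro k _
    rw [hx (k + 1), hx k, one_div_mul_cancel hL.ne']
    push_cast; ring
  -- sum
  have hsum : (∑ k ∈ Finset.range (n + 1), (h (x k) - 0)) = L / 2 * ((n : ℝ) + 1) ^ 2 := by
    have hterm : ∀ k ∈ Finset.range (n + 1), h (x k) - 0 = L * ((n:ℝ) + 1 - k) - L / 2 := by
      intro k hk
      rw [Finset.mem_range, Nat.lt_succ_iff] at hk
      have hxk : (1:ℝ) ≤ x k := by
        rw [hx k]; have : (k:ℝ) ≤ n := Nat.cast_le.2 hk; linarith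
      rw [sub_zero, hdef (x k)]
      rcases eq_or_lt_of_le hxk with h1 | h1
      · rw [← h1]; rw [hx k] at h1; rw [← h1]; norm_num; ring
      · have : ¬ |x k| ≤ 1 := by rw [abs_le]; push_neg; intro; linarith
        rw [if_neg this, abs_of_pos (by linarith), hx k]
    rw [Finset.sum_congr rfl hterm]
    have hgauss := gauss_sum_real n
    simp only [mul_sub, Finset.sum_sub_distrib, Finset.sum_const, Finset.card_range,
      nsmul_eq_mul, ← Finset.mul_sum]
    rw [hgauss]
    push_cast; ring
  -- final
  have hfinal : L / 2 * ((n : ℝ) + 1) ^ 2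
      = L / 2 * Metric.infDist (x 0) ({0} : Set ℝ) ^ 2 := by
    rw [hid, hx 0]
    rw [Nat.cast_zero, sub_zero, abs_of_pos (by positivity)]
  exact ⟨hconv, hmin, h0, hqg, hxg, hstep, hsum, hfinal⟩
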